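/- arXiv:1301.4628 — 3 statements merged into one kernel-verified Lean document; each statement's English description precedes it below -/
import Mathlib

section
/- Let d ≤ D in Θ with d < D, and define ρ(a, δ) = log(β(a)/β(δ)) + (δ − a) H(a) where H = β′/β is strictly decreasing. Then there exists a unique δ* ∈ (d, D) such that ρ(d, δ*) = ρ(D, δ*), and it is given explicitly by δ* = [D·H(D) − d·H(d) − log(β(D)/β(d))] / (H(D) − H(d)). -/
open Real Set

/-- Let d < D in Θ and
`ρ(a, δ) = log(β(a)/β(δ)) + (δ − a) H(a)` with `H = β′/β` strictly decreasing.
Then there exists a unique `δ* ∈ (d, D)` with `ρ(d, δ*) = ρ(D, δ*)`, given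
explicitly by `δ* = [D·H(D) − d·H(d) − log(β(D)/β(d))]/(H(D) − H(d))`. -/
theorem stmt_5 (Θ : Set ℝ) (hΘ : Convex ℝ Θ) (β β' : ℝ → ℝ)
    (hβpos : ∀ s ∈ Θ, 0 < β s)
    (hβ' : ∀ s ∈ Θ, HasDerivAt β (β' s) s)
    (H : ℝ → ℝ) (hHdef : ∀ s, H s = β' s / β s)
    (hH : StrictAntiOn H Θ)
    (d D : ℝ) (hd : d ∈ Θ) (hD : D ∈ Θ) (hdD : d < D)
    (ρ : ℝ → ℝ → ℝ)
    (hρ : ∀ a δ, ρ a δ = Real.log (β a / β δ) + (δ - a) * H a)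
    (δstar : ℝ)
    (hδstar : δstar =
      (D * H D - d * H d - Real.log (β D / β d)) / (H D - H d)) :
    (δstar ∈ Ioo d D ∧ ρ d δstar = ρ D δstar) ∧
      ∀ δ ∈ Ioo d D, ρ d δ = ρ D δ → δ = δstar := by
  have hsub : Icc d D ⊆ Θ := hΘ.ordConnected.out hd hD
  set L : ℝ := Real.log (β D) - Real.log (β d) with hL
  -- derivative of log ∘ β
  have hlogderiv : ∀ s ∈ Icc d D, HasDerivAt (fun x => Real.log (β x)) (H s) s := by
    intro s hs
    have := (hβ' s (hsub hs)).log (ne_of_gt (hβpos s (hsub hs)))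
    simpa [hHdef s] using this
  have hcont : ContinuousOn (fun x => Real.log (β x)) (Icc d D) :=
    fun s hs => ((hlogderiv s hs).continuousAt).continuousWithinAt
  obtain ⟨c, hc, hceq⟩ := exists_hasDerivAt_eq_slope (fun x => Real.log (β x)) H hdD hcont
    (fun s hs => hlogderiv s (Ioo_subset_Icc_self hs))
  have hcΘ : c ∈ Θ := hsub (Ioo_subset_Icc_self hc)
  have hDd : (0:ℝ) < D - d := by linarith
  have hLc : L = H c * (D - d) := by
    field_simp at hceq
    rw [hL]; linarith [hceq]
  have hlow : H D * (D - d) < L := by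
    have := hH hcΘ hD hc.2
    rw [hLc]; nlinarith
  have hhigh : L < H d * (D - d) := by
    have := hH hd hcΘ hc.1
    rw [hLc]; nlinarith
  have hden : H D - H d < 0 := by
    have := hH hd hD hdD; linarith
  have hdenne : H D - H d ≠ 0 := ne_of_lt hden
  have hδ : δstar = (D * H D - d * H d - L) / (H D - H d) := by
    rw [hδstar, Real.log_div (ne_of_gt (hβpos D hD)) (ne_of_gt (hβpos d hd))]
  have hmemIoo : δstar ∈ Ioo d D := by
    constructor
    · rw [hδ, lt_div_iff_of_neg hden]; nlinarith
    · rw [hδ, div_lt_iff_of_neg hden]; nlinarith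
  have hδΘ : δstar ∈ Θ := hsub (Ioo_subset_Icc_self hmemIoo)
  have key : δstar * (H D - H d) = D * H D - d * H d - L := by
    rw [hδ]; field_simp
  refine ⟨⟨hmemIoo, ?_⟩, ?_⟩
  · rw [hρ, hρ, Real.log_div (ne_of_gt (hβpos d hd)) (ne_of_gt (hβpos δstar hδΘ)),
      Real.log_div (ne_of_gt (hβpos D hD)) (ne_of_gt (hβpos δstar hδΘ))]
    have hLdef : Real.log (β D) - Real.log (β d) = L := rfl
    nlinarith [key]
  · intro δ hδmem hρeq
    have hδΘ' : δ ∈ Θ := hsub (Ioo_subset_Icc_self hδmem)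
    rw [hρ, hρ, Real.log_div (ne_of_gt (hβpos d hd)) (ne_of_gt (hβpos δ hδΘ')),
      Real.log_div (ne_of_gt (hβpos D hD)) (ne_of_gt (hβpos δ hδΘ'))] at hρeq
    have key2 : δ * (H D - H d) = D * H D - d * H d - L := by nlinarith [hρeq]
    have := key2.trans key.symm
    exact mul_right_cancel₀ hdenne this
end

section
/- With d < D in Θ, H = β′/β strictly decreasing, ρ(a, δ) = log(β(a)/β(δ)) + (δ − a) H(a), and δ* = [D·H(D) − d·H(d) − log(β(D)/β(d))]/(H(D) − H(d)), the minimax identity holds: inf over δ ∈ Θ of max{ρ(d, δ), ρ(D, δ)} = ρ(d, δ*) = ρ(D, δ*), and this infimum is attained only at δ = δ*. -/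
open Real Set

/-- With d < D in Θ, `H = β′/β` strictly decreasing,
`ρ(a, δ) = log(β(a)/β(δ)) + (δ − a) H(a)` and
`δ* = [D·H(D) − d·H(d) − log(β(D)/β(d))]/(H(D) − H(d))`, the minimax identity
holds: the infimum over δ ∈ Θ of `max{ρ(d, δ), ρ(D, δ)}` equals
`ρ(d, δ*) = ρ(D, δ*)`, and this infimum is attained only at δ = δ*. -/
theorem stmt_6 (Θ : Set ℝ) (hΘ : Convex ℝ Θ) (β β' : ℝ → ℝ)
    (hβpos : ∀ s ∈ Θ, 0 < β s)
    (hβ' : ∀ s ∈ Θ, HasDerivAt β (β' s) s)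
    (H : ℝ → ℝ) (hHdef : ∀ s, H s = β' s / β s)
    (hH : StrictAntiOn H Θ)
    (d D : ℝ) (hd : d ∈ Θ) (hD : D ∈ Θ) (hdD : d < D)
    (ρ : ℝ → ℝ → ℝ)
    (hρ : ∀ a δ, ρ a δ = Real.log (β a / β δ) + (δ - a) * H a)
    (δstar : ℝ)
    (hδstar : δstar =
      (D * H D - d * H d - Real.log (β D / β d)) / (H D - H d)) :
    δstar ∈ Ioo d D ∧ ρ d δstar = ρ D δstar ∧
      IsLeast ((fun δ => max (ρ d δ) (ρ D δ)) '' Θ) (ρ d δstar) ∧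
      ∀ δ ∈ Θ, max (ρ d δ) (ρ D δ) = ρ d δstar → δ = δstar := by
  set L : ℝ → ℝ := fun s => Real.log (β s) with hL
  have hLd : ∀ s ∈ Θ, HasDerivAt L (H s) s := by
    intro s hs
    have h := (hβ' s hs).log (ne_of_gt (hβpos s hs))
    simpa [hL, hHdef s] using h
  have hsub : ∀ {a b : ℝ}, a ∈ Θ → b ∈ Θ → Icc a b ⊆ Θ := fun ha hb =>
    hΘ.ordConnected.out ha hb
  -- mean value theorem for L
  have mvt : ∀ a b, a ∈ Θ → b ∈ Θ → a < b →
      ∃ c, c ∈ Ioo a b ∧ L b - L a = (b - a) * H c := by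
    intro a b ha hb hab
    have hsubΘ : Icc a b ⊆ Θ := hsub ha hb
    have hcont : ContinuousOn L (Icc a b) := fun x hx =>
      ((hLd x (hsubΘ hx)).continuousAt).continuousWithinAt
    have hdiff : ∀ x ∈ Ioo a b, HasDerivAt L (H x) x := fun x hx =>
      hLd x (hsubΘ (Ioo_subset_Icc_self hx))
    obtain ⟨c, hc, hceq⟩ := exists_hasDerivAt_eq_slope L H hab hcont hdiff
    refine ⟨c, hc, ?_⟩
    rw [eq_div_iff (sub_ne_zero.mpr hab.ne')] at hceq
    linarith [hceq, mul_comm (H c) (b - a), mul_comm (b - a) (H c)]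
  have hρL : ∀ a ∈ Θ, ∀ δ ∈ Θ, ρ a δ = L a - L δ + (δ - a) * H a := by
    intro a ha δ hδ
    rw [hρ, Real.log_div (ne_of_gt (hβpos a ha)) (ne_of_gt (hβpos δ hδ))]
  have hρself : ∀ a ∈ Θ, ρ a a = 0 := by
    intro a ha
    rw [hρL a ha a ha]; ring
  -- ρ a ⬝ is strictly increasing to the right of a
  have key1 : ∀ a ∈ Θ, ∀ δ₁ ∈ Θ, ∀ δ₂ ∈ Θ, a ≤ δ₁ → δ₁ < δ₂ →
      ρ a δ₁ < ρ a δ₂ := by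
    intro a ha δ₁ h₁ δ₂ h₂ hle hlt
    obtain ⟨c, hc, hceq⟩ := mvt δ₁ δ₂ h₁ h₂ hlt
    have hcΘ : c ∈ Θ := hsub h₁ h₂ (Ioo_subset_Icc_self hc)
    have hHc : H c < H a := hH ha hcΘ (lt_of_le_of_lt hle hc.1)
    rw [hρL a ha δ₁ h₁, hρL a ha δ₂ h₂]
    nlinarith [mul_pos (sub_pos.mpr hlt) (sub_pos.mpr hHc)]
  -- ρ a ⬝ is strictly decreasing to the left of a
  have key2 : ∀ a ∈ Θ, ∀ δ₁ ∈ Θ, ∀ δ₂ ∈ Θ, δ₁ < δ₂ → δ₂ ≤ a →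
      ρ a δ₂ < ρ a δ₁ := by
    intro a ha δ₁ h₁ δ₂ h₂ hlt hle
    obtain ⟨c, hc, hceq⟩ := mvt δ₁ δ₂ h₁ h₂ hlt
    have hcΘ : c ∈ Θ := hsub h₁ h₂ (Ioo_subset_Icc_self hc)
    have hHc : H a < H c := hH hcΘ ha (lt_of_lt_of_le hc.2 hle)
    rw [hρL a ha δ₁ h₁, hρL a ha δ₂ h₂]
    nlinarith [mul_pos (sub_pos.mpr hlt) (sub_pos.mpr hHc)]
  have hρpos : ∀ a ∈ Θ, ∀ b ∈ Θ, a ≠ b → 0 < ρ a b := by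
    intro a ha b hb hne
    rcases lt_or_gt_of_ne hne with h | h
    · have := key1 a ha a ha b hb le_rfl h
      rwa [hρself a ha] at this
    · have := key2 a ha b hb a ha h le_rfl
      rwa [hρself a ha] at this
  have hHdD : H D < H d := hH hd hD hdD
  have hHne : H D - H d ≠ 0 := sub_ne_zero.mpr hHdD.ne
  have hδs : δstar * (H D - H d) = D * H D - d * H d - (L D - L d) := by
    rw [hδstar, div_mul_cancel₀ _ hHne,
      Real.log_div (ne_of_gt (hβpos D hD)) (ne_of_gt (hβpos d hd))]
  -- the difference is linear with positive slope, vanishing at δstar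
  have hg : ∀ δ ∈ Θ, ρ d δ - ρ D δ = (δ - δstar) * (H d - H D) := by
    intro δ hδ
    rw [hρL d hd δ hδ, hρL D hD δ hδ]
    linear_combination -hδs
  have hd_lt : d < δstar := by
    have h1 := hg d hd
    rw [hρself d hd] at h1
    have h2 : 0 < ρ D d := hρpos D hD d hd hdD.ne'
    nlinarith [sub_pos.mpr hHdD]
  have hlt_D : δstar < D := by
    have h1 := hg D hD
    rw [hρself D hD] at h1
    have h2 : 0 < ρ d D := hρpos d hd D hD hdD.ne
    nlinarith [sub_pos.mpr hHdD]
  have hδΘ : δstar ∈ Θ := hsub hd hD ⟨hd_lt.le, hlt_D.le⟩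
  have heq : ρ d δstar = ρ D δstar := by
    have := hg δstar hδΘ
    simp at this
    linarith
  have hmin : ∀ δ ∈ Θ, δ ≠ δstar → ρ d δstar < max (ρ d δ) (ρ D δ) := by
    intro δ hδ hne
    rcases lt_or_gt_of_ne hne with h | h
    · have h2 : ρ D δstar < ρ D δ := key2 D hD δ hδ δstar hδΘ h hlt_D.le
      calc ρ d δstar = ρ D δstar := heq
        _ < ρ D δ := h2
        _ ≤ max (ρ d δ) (ρ D δ) := le_max_right _ _
    · have h2 : ρ d δstar < ρ d δ := key1 d hd δstar hδΘ δ hδ hd_lt.le h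
      calc ρ d δstar < ρ d δ := h2
        _ ≤ max (ρ d δ) (ρ D δ) := le_max_left _ _
  refine ⟨⟨hd_lt, hlt_D⟩, heq, ⟨⟨δstar, hδΘ, ?_⟩, ?_⟩, ?_⟩
  · simp [← heq]
  · rintro x ⟨δ, hδ, rfl⟩
    by_cases hcase : δ = δstar
    · subst hcase; simp [← heq]
    · exact (hmin δ hδ hcase).le
  · intro δ hδ heqmax
    by_contra hne
    exact absurd heqmax (ne_of_gt (hmin δ hδ hne))
end

section
/- For the exponential model with conjugate priors π_{α,λ₀} having Bayes estimators Ψ(α, x) = (α+1)/(λ₀ + x), the PRGM estimator δ_PR(x) = [(α₁+1)(α₂+1)/(α₁−α₂)]·log((α₁+1)/(α₂+1))·1/(λ₀+x) equals Ψ(α*, x) for the data-independent hyperparameter α* = [(α₁+1)(α₂+1)/(α₁−α₂)]·log((α₁+1)/(α₂+1)) − 1, and moreover α* ∈ [α₁, α₂]. -/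
open Real Set

/-- For the exponential model with conjugate priors π_{α,λ₀}
having Bayes estimators `Ψ(α, x) = (α+1)/(λ₀ + x)`, the PRGM estimator
`δ_PR(x) = [(α₁+1)(α₂+1)/(α₁−α₂)]·log((α₁+1)/(α₂+1))·1/(λ₀+x)` equals
`Ψ(α*, x)` for the data-independent hyperparameter
`α* = [(α₁+1)(α₂+1)/(α₁−α₂)]·log((α₁+1)/(α₂+1)) − 1`, and α* ∈ [α₁, α₂]. -/
theorem stmt_18 (α₁ α₂ lam₀ x : ℝ) (h1 : 0 < α₁) (h12 : α₁ < α₂)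
    (hlam : 0 < lam₀) (hx : 0 < x)
    (Ψ : ℝ → ℝ → ℝ) (hΨ : ∀ α y, Ψ α y = (α + 1) / (lam₀ + y))
    (δPR : ℝ)
    (hδPR : δPR = (α₁ + 1) * (α₂ + 1) / (α₁ - α₂) *
      Real.log ((α₁ + 1) / (α₂ + 1)) * (1 / (lam₀ + x)))
    (αstar : ℝ)
    (hαstar : αstar = (α₁ + 1) * (α₂ + 1) / (α₁ - α₂) *
      Real.log ((α₁ + 1) / (α₂ + 1)) - 1) :
    δPR = Ψ αstar x ∧ αstar ∈ Icc α₁ α₂ := by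
  have ha : (0:ℝ) < α₁ + 1 := by linarith
  have hb : (0:ℝ) < α₂ + 1 := by linarith
  have hba : (0:ℝ) < (α₂ + 1) - (α₁ + 1) := by linarith
  have hne : α₁ - α₂ ≠ 0 := by intro h; linarith [sub_eq_zero.mp h]
  have hlogeq0 : Real.log ((α₁ + 1) / (α₂ + 1)) = - Real.log ((α₂ + 1) / (α₁ + 1)) := by
    rw [Real.log_div ha.ne' hb.ne', Real.log_div hb.ne' ha.ne']; ring
  -- rewrite the key quantity with positive denominator
  have hCeq : (α₁ + 1) * (α₂ + 1) / (α₁ - α₂) * Real.log ((α₁ + 1) / (α₂ + 1))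
      = (α₁ + 1) * (α₂ + 1) * Real.log ((α₂ + 1) / (α₁ + 1)) / ((α₂ + 1) - (α₁ + 1)) := by
    rw [hlogeq0]
    rw [div_mul_eq_mul_div, eq_div_iff hba.ne', div_mul_eq_mul_div, div_eq_iff hne]
    ring
  -- log bounds
  have hlog1 : Real.log ((α₂ + 1) / (α₁ + 1)) ≤ (α₂ + 1) / (α₁ + 1) - 1 :=
    Real.log_le_sub_one_of_pos (div_pos hb ha)
  have hlog2 : Real.log ((α₁ + 1) / (α₂ + 1)) ≤ (α₁ + 1) / (α₂ + 1) - 1 :=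
    Real.log_le_sub_one_of_pos (div_pos ha hb)
  have hlogeq : Real.log ((α₁ + 1) / (α₂ + 1)) = - Real.log ((α₂ + 1) / (α₁ + 1)) := by
    rw [Real.log_div ha.ne' hb.ne', Real.log_div hb.ne' ha.ne']; ring
  have hlog1' : (α₁ + 1) * Real.log ((α₂ + 1) / (α₁ + 1)) ≤ (α₂ + 1) - (α₁ + 1) := by
    have h := mul_le_mul_of_nonneg_left hlog1 ha.le
    have : (α₁ + 1) * ((α₂ + 1) / (α₁ + 1) - 1) = (α₂ + 1) - (α₁ + 1) := by
      field_simp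
    linarith
  have hlog2' : (α₂ + 1) - (α₁ + 1) ≤ (α₂ + 1) * Real.log ((α₂ + 1) / (α₁ + 1)) := by
    have h := mul_le_mul_of_nonneg_left hlog2 hb.le
    have heq : (α₂ + 1) * ((α₁ + 1) / (α₂ + 1) - 1) = (α₁ + 1) - (α₂ + 1) := by
      field_simp
    rw [hlogeq] at h
    rw [heq] at h
    linarith
  refine ⟨?_, ?_, ?_⟩
  · rw [hΨ, hδPR, hαstar]; ring
  · rw [hαstar, hCeq, le_sub_iff_add_le, le_div_iff₀ hba]
    nlinarith [hlog2', ha]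
  · rw [hαstar, hCeq, sub_le_iff_le_add, div_le_iff₀ hba]
    nlinarith [hlog1', hb]
end
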